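/- Consider the Steiner tree instance where G is a cycle on n vertices with unit edge costs, k divides n, every (n/k)-th vertex along the cycle is a terminal (so |R| = k ≥ 2), and r is one fixed terminal. Let y be any feasible solution to the dual of the bidirected cut relaxation whose support { U : y_U > 0 } is a laminar family. Then ∑_U y_U ≤ n/2 + k. -/

import Mathlib

private lemma right_end' {n : ℕ} [NeZero n] (U : Finset (ZMod n)) (h0 : (0:ZMod n) ∉ U)
    (t : ZMod n) (ht : t ∈ U) :
    ∃ ρ : ZMod n, ρ ∈ U ∧ ρ + 1 ∉ U ∧ (ρ = t ∨ ρ - 1 ∈ U) := by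
  classical
  have hex : ∃ j : ℕ, t + ((j+1 : ℕ) : ZMod n) ∉ U := by
    refine ⟨n - 1 - t.val, ?_⟩
    have hval : t.val < n := ZMod.val_lt t
    have h1 : (n - 1 - t.val) + 1 = n - t.val := by omega
    rw [h1]
    have h2 : ((n - t.val : ℕ) : ZMod n) = -((t.val : ℕ) : ZMod n) := by
      rw [Nat.cast_sub hval.le, ZMod.natCast_self, zero_sub]
    rw [h2, ZMod.natCast_val, ZMod.cast_id]
    simpa using h0
  set c := Nat.find hex with hc
  have hmem : ∀ j : ℕ, j ≤ c → t + (j : ZMod n) ∈ U := by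
    intro j hj
    cases j with
    | zero => simpa using ht
    | succ i =>
      have h := Nat.find_min hex (show i < c by omega)
      exact not_not.mp h
  refine ⟨t + (c : ZMod n), hmem c le_rfl, ?_, ?_⟩
  · have hspec := Nat.find_spec hex
    intro hmem'
    apply hspec
    have : ((c + 1 : ℕ) : ZMod n) = (c : ZMod n) + 1 := by push_cast; ring
    rw [this]
    exact (by rw [← add_assoc]; exact hmem')
  · rcases Nat.eq_zero_or_pos c with h | h
    · left; simp [h]
    · right
      have h1 : t + ((c - 1 : ℕ) : ZMod n) ∈ U := hmem (c-1) (by omega)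
      have h2 : t + (c : ZMod n) - 1 = t + ((c - 1 : ℕ) : ZMod n) := by
        rw [Nat.cast_sub h]; push_cast; ring
      rw [h2]; exact h1

private lemma left_end' {n : ℕ} [NeZero n] (U : Finset (ZMod n)) (h0 : (0:ZMod n) ∉ U)
    (t : ZMod n) (ht : t ∈ U) :
    ∃ l : ZMod n, l ∈ U ∧ l - 1 ∉ U ∧ (l = t ∨ l + 1 ∈ U) := by
  classical
  set V := U.image (fun x => -x) with hV
  have hmemV : ∀ x : ZMod n, x ∈ V ↔ -x ∈ U := by
    intro x
    constructor
    · intro hx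
      rw [hV, Finset.mem_image] at hx
      obtain ⟨a, ha, rfl⟩ := hx
      simpa using ha
    · intro hx
      rw [hV, Finset.mem_image]
      exact ⟨-x, hx, by simp⟩
  have h0V : (0:ZMod n) ∉ V := fun h => h0 (by simpa using (hmemV 0).mp h)
  have htV : -t ∈ V := (hmemV (-t)).mpr (by simpa using ht)
  obtain ⟨ρ, hρV, hρ1, hρalt⟩ := right_end' V h0V (-t) htV
  refine ⟨-ρ, (hmemV ρ).mp hρV, ?_, ?_⟩
  · intro hm
    apply hρ1
    refine (hmemV (ρ + 1)).mpr ?_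
    have : -(ρ + 1) = -ρ - 1 := by ring
    rw [this]; exact hm
  · rcases hρalt with he | hmem
    · left; rw [he]; ring
    · right
      have : -ρ + 1 = -(ρ - 1) := by ring
      rw [this]
      exact (hmemV (ρ - 1)).mp hmem

/-- On the cycle on n vertices with unit costs, k equally spaced terminals (k ∣ n, k ≥ 2)
and root r = 0, every feasible solution to the dual of the bidirected cut relaxation whose
support is a laminar family has value at most n/2 + k. -/
theorem stmt_6 (n k : ℕ) [NeZero n] (hk : 2 ≤ k) (hkn : k ≤ n) (hdvd : k ∣ n)
    (y : Finset (ZMod n) → ℝ)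
    (hnn : ∀ U, 0 ≤ y U)
    (hsupp : ∀ U : Finset (ZMod n),
      ¬((0 : ZMod n) ∉ U ∧
        (U ∩ Finset.univ.filter (fun i : ZMod n => (n / k) ∣ i.val)).Nonempty) →
      y U = 0)
    (hfeas : ∀ i j : ZMod n, (j = i + 1 ∨ i = j + 1) →
      ∑ U ∈ Finset.univ.filter (fun U : Finset (ZMod n) => i ∈ U ∧ j ∉ U), y U ≤ 1)
    (hlam : ∀ A B : Finset (ZMod n), 0 < y A → 0 < y B →
      A ⊆ B ∨ B ⊆ A ∨ A ∩ B = ∅) :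
    ∑ U : Finset (ZMod n), y U ≤ (n : ℝ) / 2 + k := by
  classical
  set m := n / k with hm
  set T : Finset (ZMod n) := Finset.univ.filter (fun i : ZMod n => m ∣ i.val) with hTdef
  set S : Finset (Finset (ZMod n)) := Finset.univ.filter (fun U => 0 < y U) with hSdef
  have hSmem : ∀ U, U ∈ S ↔ 0 < y U := by intro U; simp [hSdef]
  have hsupp' : ∀ U, 0 < y U → (0:ZMod n) ∉ U ∧ (U ∩ T).Nonempty := by
    intro U hU
    by_contra h
    exact absurd (hsupp U h) (ne_of_gt hU)
  -- choose endpoints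
  have hex : ∀ U : Finset (ZMod n), 0 < y U →
      ∃ R L t : ZMod n, m ∣ t.val ∧ R ∈ U ∧ R + 1 ∉ U ∧ (R = t ∨ R - 1 ∈ U)
        ∧ L ∈ U ∧ L - 1 ∉ U ∧ (L = t ∨ L + 1 ∈ U) := by
    intro U hU
    obtain ⟨h0, hne⟩ := hsupp' U hU
    obtain ⟨t, ht⟩ := hne
    rw [Finset.mem_inter, hTdef, Finset.mem_filter] at ht
    obtain ⟨htU, -, htd⟩ := ht
    obtain ⟨R, hR1, hR2, hR3⟩ := right_end' U h0 t htU
    obtain ⟨L, hL1, hL2, hL3⟩ := left_end' U h0 t htU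
    exact ⟨R, L, t, htd, hR1, hR2, hR3, hL1, hL2, hL3⟩
  choose! R L t htd hRU hR1 hRalt hLU hL1 hLalt using hex
  -- sum over support only
  have hsum0 : ∑ U : Finset (ZMod n), y U = ∑ U ∈ S, y U := by
    rw [hSdef]
    exact (Finset.sum_filter_of_ne (fun U _ hne => lt_of_le_of_ne (hnn U) (Ne.symm hne))).symm
  -- generic image bound
  have himg : ∀ (g : Finset (ZMod n) → ZMod n) (nb : ZMod n → ZMod n),
      (∀ v : ZMod n,
        ∑ U ∈ Finset.univ.filter (fun U : Finset (ZMod n) => v ∈ U ∧ nb v ∉ U), y U ≤ 1) →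
      (∀ U ∈ S, g U ∈ U ∧ nb (g U) ∉ U) →
      ∑ U ∈ S, y U ≤ ((S.image g).card : ℝ) := by
    intro g nb hfe hg
    rw [← Finset.sum_fiberwise_of_maps_to (fun U hU => Finset.mem_image_of_mem g hU) y]
    calc ∑ v ∈ S.image g, ∑ U ∈ S.filter (fun U => g U = v), y U
        ≤ ∑ v ∈ S.image g, 1 := by
          refine Finset.sum_le_sum ?_
          intro v hv
          refine le_trans (Finset.sum_le_sum_of_subset_of_nonneg ?_ (fun U _ _ => hnn U)) (hfe v)
          intro U hU
          obtain ⟨hUS, hgU⟩ := Finset.mem_filter.mp hU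
          exact Finset.mem_filter.mpr
            ⟨Finset.mem_univ _, hgU ▸ (hg U hUS).1, hgU ▸ (hg U hUS).2⟩
      _ = ((S.image g).card : ℝ) := by simp
  have hRbound : ∑ U ∈ S, y U ≤ ((S.image R).card : ℝ) :=
    himg R (fun v => v + 1) (fun v => hfeas v (v+1) (Or.inl rfl))
      (fun U hU => ⟨hRU U ((hSmem U).mp hU), hR1 U ((hSmem U).mp hU)⟩)
  have hLbound : ∑ U ∈ S, y U ≤ ((S.image L).card : ℝ) :=
    himg L (fun v => v - 1) (fun v => hfeas v (v-1) (Or.inr (by ring)))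
      (fun U hU => ⟨hLU U ((hSmem U).mp hU), hL1 U ((hSmem U).mp hU)⟩)
  -- intersection of endpoint images consists of terminals
  have hintT : S.image R ∩ S.image L ⊆ T := by
    intro v hv
    rw [Finset.mem_inter] at hv
    obtain ⟨hvR, hvL⟩ := hv
    obtain ⟨U2, hU2, hR2v⟩ := Finset.mem_image.mp hvR
    obtain ⟨U1, hU1, hL1v⟩ := Finset.mem_image.mp hvL
    have hy2 := (hSmem U2).mp hU2
    have hy1 := (hSmem U1).mp hU1
    rcases hlam U1 U2 hy1 hy2 with h12 | h21 | hdis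
    · rcases hLalt U1 hy1 with he | hmem1
      · rw [hTdef, Finset.mem_filter]
        refine ⟨Finset.mem_univ _, ?_⟩
        rw [← hL1v, he]
        exact htd U1 hy1
      · exfalso
        apply hR1 U2 hy2
        rw [hR2v, ← hL1v]
        exact h12 hmem1
    · rcases hRalt U2 hy2 with he | hmem2
      · rw [hTdef, Finset.mem_filter]
        refine ⟨Finset.mem_univ _, ?_⟩
        rw [← hR2v, he]
        exact htd U2 hy2
      · exfalso
        apply hL1 U1 hy1
        rw [hL1v, ← hR2v]
        exact h21 hmem2
    · exfalso
      have hv1 : v ∈ U1 := hL1v ▸ hLU U1 hy1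
      have hv2 : v ∈ U2 := hR2v ▸ hRU U2 hy2
      have : v ∈ U1 ∩ U2 := Finset.mem_inter.mpr ⟨hv1, hv2⟩
      rw [hdis] at this
      exact absurd this (Finset.notMem_empty v)
  -- terminals number at most k
  have hTk : T.card ≤ k := by
    have hmpos : 0 < m := Nat.div_pos hkn (by omega)
    have hnm : m * k = n := by rw [hm]; exact Nat.div_mul_cancel hdvd
    have h := Finset.card_le_card_of_injOn (s := T) (t := Finset.range k)
      (fun i : ZMod n => i.val / m) ?_ ?_
    · simpa using h
    · intro i hi
      rw [Finset.mem_coe, Finset.mem_range]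
      have hv : i.val < n := ZMod.val_lt i
      have hlt : i.val < m * k := by omega
      exact Nat.div_lt_of_lt_mul hlt
    · intro i hi j hj heq
      simp only [Finset.mem_coe, hTdef, Finset.mem_filter] at hi hj
      have hi' : m * (i.val / m) = i.val := Nat.mul_div_cancel' hi.2
      have hj' : m * (j.val / m) = j.val := Nat.mul_div_cancel' hj.2
      have hval : i.val = j.val := by rw [← hi', ← hj']; simp only [heq]
      exact ZMod.val_injective n hval
  -- combine
  have hcards : (S.image R).card + (S.image L).card ≤ n + k := by
    have h1 := Finset.card_union_add_card_inter (S.image R) (S.image L)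
    have h2 : (S.image R ∪ S.image L).card ≤ n := by
      have := Finset.card_le_univ (S.image R ∪ S.image L)
      simpa [Finset.card_univ, ZMod.card] using this
    have h3 : (S.image R ∩ S.image L).card ≤ k :=
      (Finset.card_le_card hintT).trans hTk
    omega
  have hcardsR : ((S.image R).card : ℝ) + ((S.image L).card : ℝ) ≤ (n : ℝ) + k := by
    exact_mod_cast hcards
  have hk0 : (0:ℝ) ≤ k := by positivity
  rw [hsum0]
  linarith
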